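/- Let P, A_cl ∈ ℝ^{n×n}, K ∈ ℝ^{m₁×n}, L ∈ ℝ^{m₂×n}, δA ∈ ℝ^{n×n}, δB₁ ∈ ℝ^{n×m₁}, δB₂ ∈ ℝ^{n×m₂}, and set δA_cl = δA − δB₁K − δB₂L. Then ‖δA_clᵀ P A_cl + A_clᵀ P δA_cl‖_F ≤ 2‖P‖₂·‖A_cl‖₂·√(1 + ‖K‖₂² + ‖L‖₂²)·√(‖δA‖_F² + ‖δB₁‖_F² + ‖δB₂‖_F²). -/

import Mathlib

open Matrix
open scoped Matrix.Norms.L2Operator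

/-- The Frobenius norm of a real matrix. -/
noncomputable def frobNorm {m n : ℕ} (M : Matrix (Fin m) (Fin n) ℝ) : ℝ :=
  Real.sqrt (∑ i, ∑ j, (M i j) ^ 2)

lemma frobNorm_nonneg {m n : ℕ} (M : Matrix (Fin m) (Fin n) ℝ) : 0 ≤ frobNorm M :=
  Real.sqrt_nonneg _

lemma frobNorm_sq {m n : ℕ} (M : Matrix (Fin m) (Fin n) ℝ) :
    frobNorm M ^ 2 = ∑ i, ∑ j, (M i j) ^ 2 := by
  apply Real.sq_sqrt
  positivity

noncomputable def matVec {m n : ℕ} (M : Matrix (Fin m) (Fin n) ℝ) :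
    EuclideanSpace ℝ (Fin m × Fin n) :=
  (WithLp.equiv 2 ((Fin m × Fin n) → ℝ)).symm (fun p => M p.1 p.2)

lemma frobNorm_eq_norm {m n : ℕ} (M : Matrix (Fin m) (Fin n) ℝ) :
    frobNorm M = ‖matVec M‖ := by
  rw [EuclideanSpace.norm_eq, frobNorm]
  congr 1
  rw [Fintype.sum_prod_type]
  simp [matVec, Real.norm_eq_abs, sq_abs]

lemma frobNorm_add_le {m n : ℕ} (M N : Matrix (Fin m) (Fin n) ℝ) :
    frobNorm (M + N) ≤ frobNorm M + frobNorm N := by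
  rw [frobNorm_eq_norm, frobNorm_eq_norm, frobNorm_eq_norm]
  have : matVec (M + N) = matVec M + matVec N := rfl
  rw [this]
  exact norm_add_le _ _

lemma frobNorm_transpose {m n : ℕ} (M : Matrix (Fin m) (Fin n) ℝ) :
    frobNorm Mᵀ = frobNorm M := by
  rw [frobNorm, frobNorm, Finset.sum_comm]
  rfl

lemma frobNorm_neg {m n : ℕ} (M : Matrix (Fin m) (Fin n) ℝ) :
    frobNorm (-M) = frobNorm M := by
  simp [frobNorm]

/-- `‖A * B‖_F ≤ ‖A‖₂ ‖B‖_F`. -/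
lemma opNorm_mul_frobNorm {k n p : ℕ} (A : Matrix (Fin k) (Fin n) ℝ)
    (B : Matrix (Fin n) (Fin p) ℝ) :
    frobNorm (A * B) ≤ ‖A‖ * frobNorm B := by
  have hsq : frobNorm (A * B) ^ 2 ≤ (‖A‖ * frobNorm B) ^ 2 := by
    rw [frobNorm_sq, Finset.sum_comm]
    have key : ∀ j : Fin p, ∑ i, ((A * B) i j) ^ 2 ≤
        ‖A‖ ^ 2 * ∑ i, (B i j) ^ 2 := by
      intro j
      have h := A.l2_opNorm_mulVec ((EuclideanSpace.equiv (Fin n) ℝ).symm (fun i => B i j))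
      have hx : ‖(EuclideanSpace.equiv (Fin n) ℝ).symm (fun i => B i j)‖
          = Real.sqrt (∑ i, (B i j) ^ 2) := by
        rw [EuclideanSpace.norm_eq]
        congr 1
        simp [Real.norm_eq_abs, sq_abs]
      have hy : ‖(EuclideanSpace.equiv (Fin k) ℝ).symm
          (A *ᵥ ((EuclideanSpace.equiv (Fin n) ℝ).symm (fun i => B i j)))‖
          = Real.sqrt (∑ i, ((A * B) i j) ^ 2) := by
        rw [EuclideanSpace.norm_eq]
        congr 1
        refine Finset.sum_congr rfl fun i _ => ?_
        simp [Real.norm_eq_abs, sq_abs, Matrix.mul_apply, Matrix.mulVec, dotProduct]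
      rw [hy, hx] at h
      have h2 : Real.sqrt (∑ i, ((A * B) i j) ^ 2) ^ 2 ≤
          (‖A‖ * Real.sqrt (∑ i, (B i j) ^ 2)) ^ 2 := by
        apply pow_le_pow_left₀ (Real.sqrt_nonneg _) h
      rw [Real.sq_sqrt (by positivity)] at h2
      calc ∑ i, ((A * B) i j) ^ 2 ≤ (‖A‖ * Real.sqrt (∑ i, (B i j) ^ 2)) ^ 2 := h2
        _ = ‖A‖ ^ 2 * ∑ i, (B i j) ^ 2 := by
            rw [mul_pow, Real.sq_sqrt (by positivity)]
    calc ∑ j, ∑ i, ((A * B) i j) ^ 2 ≤ ∑ j, ‖A‖ ^ 2 * ∑ i, (B i j) ^ 2 :=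
          Finset.sum_le_sum fun j _ => key j
      _ = ‖A‖ ^ 2 * ∑ j, ∑ i, (B i j) ^ 2 := by rw [Finset.mul_sum]
      _ = (‖A‖ * frobNorm B) ^ 2 := by
          rw [mul_pow, frobNorm_sq, Finset.sum_comm]
  have h1 : 0 ≤ ‖A‖ * frobNorm B := mul_nonneg (norm_nonneg _) (frobNorm_nonneg _)
  nlinarith [frobNorm_nonneg (A * B)]

/-- `‖B * A‖_F ≤ ‖B‖_F ‖A‖₂`. -/
lemma frobNorm_mul_opNorm {k n p : ℕ} (B : Matrix (Fin k) (Fin n) ℝ)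
    (A : Matrix (Fin n) (Fin p) ℝ) :
    frobNorm (B * A) ≤ frobNorm B * ‖A‖ := by
  have h1 : frobNorm (B * A) = frobNorm (Aᵀ * Bᵀ) := by
    rw [← frobNorm_transpose (B * A), Matrix.transpose_mul]
  have h2 : ‖Aᵀ‖ = ‖A‖ := by
    rw [← Matrix.conjTranspose_eq_transpose_of_trivial]
    exact Matrix.l2_opNorm_conjTranspose A
  calc frobNorm (B * A) = frobNorm (Aᵀ * Bᵀ) := h1
    _ ≤ ‖Aᵀ‖ * frobNorm Bᵀ := opNorm_mul_frobNorm _ _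
    _ = frobNorm B * ‖A‖ := by rw [h2, frobNorm_transpose, mul_comm]

theorem DthetaF_frobenius_bound
    {n m₁ m₂ : ℕ}
    (P Acl : Matrix (Fin n) (Fin n) ℝ)
    (K : Matrix (Fin m₁) (Fin n) ℝ) (L : Matrix (Fin m₂) (Fin n) ℝ)
    (δA : Matrix (Fin n) (Fin n) ℝ)
    (δB₁ : Matrix (Fin n) (Fin m₁) ℝ) (δB₂ : Matrix (Fin n) (Fin m₂) ℝ)
    (δAcl : Matrix (Fin n) (Fin n) ℝ)
    (hδAcl : δAcl = δA - δB₁ * K - δB₂ * L) :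
    frobNorm (δAclᵀ * P * Acl + Aclᵀ * P * δAcl) ≤
      2 * ‖P‖ * ‖Acl‖ * Real.sqrt (1 + ‖K‖ ^ 2 + ‖L‖ ^ 2) *
        Real.sqrt (frobNorm δA ^ 2 + frobNorm δB₁ ^ 2 + frobNorm δB₂ ^ 2) := by
  set a := frobNorm δA
  set b := frobNorm δB₁
  set c := frobNorm δB₂
  have ha : 0 ≤ a := frobNorm_nonneg _
  have hb : 0 ≤ b := frobNorm_nonneg _
  have hc : 0 ≤ c := frobNorm_nonneg _
  have hK : (0:ℝ) ≤ ‖K‖ := norm_nonneg _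
  have hL : (0:ℝ) ≤ ‖L‖ := norm_nonneg _
  -- bound on frobNorm δAcl
  have hstep : frobNorm δAcl ≤ a + b * ‖K‖ + c * ‖L‖ := by
    have h0 : δAcl = δA + (-(δB₁ * K)) + (-(δB₂ * L)) := by
      rw [hδAcl]; simp [sub_eq_add_neg]
    calc frobNorm δAcl ≤ frobNorm (δA + (-(δB₁ * K))) + frobNorm (-(δB₂ * L)) := by
          rw [h0]; exact frobNorm_add_le _ _
      _ ≤ frobNorm δA + frobNorm (-(δB₁ * K)) + frobNorm (-(δB₂ * L)) := by
          have := frobNorm_add_le δA (-(δB₁ * K))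
          linarith
      _ = frobNorm δA + frobNorm (δB₁ * K) + frobNorm (δB₂ * L) := by
          rw [frobNorm_neg, frobNorm_neg]
      _ ≤ a + b * ‖K‖ + c * ‖L‖ := by
          have h1 := frobNorm_mul_opNorm δB₁ K
          have h2 := frobNorm_mul_opNorm δB₂ L
          simp only [a, b, c]
          linarith
  -- Cauchy–Schwarz step
  have hCS : a + b * ‖K‖ + c * ‖L‖ ≤
      Real.sqrt (1 + ‖K‖ ^ 2 + ‖L‖ ^ 2) * Real.sqrt (a ^ 2 + b ^ 2 + c ^ 2) := by
    have hrhs : Real.sqrt (1 + ‖K‖ ^ 2 + ‖L‖ ^ 2) * Real.sqrt (a ^ 2 + b ^ 2 + c ^ 2)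
        = Real.sqrt ((1 + ‖K‖ ^ 2 + ‖L‖ ^ 2) * (a ^ 2 + b ^ 2 + c ^ 2)) :=
      (Real.sqrt_mul (by positivity) _).symm
    rw [hrhs]
    rw [show (Real.sqrt ((1 + ‖K‖ ^ 2 + ‖L‖ ^ 2) * (a ^ 2 + b ^ 2 + c ^ 2))) =
      Real.sqrt ((1 + ‖K‖ ^ 2 + ‖L‖ ^ 2) * (a ^ 2 + b ^ 2 + c ^ 2)) from rfl]
    have hxnn : 0 ≤ a + b * ‖K‖ + c * ‖L‖ := by positivity
    have hsq : (a + b * ‖K‖ + c * ‖L‖) ^ 2 ≤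
        (1 + ‖K‖ ^ 2 + ‖L‖ ^ 2) * (a ^ 2 + b ^ 2 + c ^ 2) := by
      nlinarith [sq_nonneg (a * ‖K‖ - b), sq_nonneg (a * ‖L‖ - c),
        sq_nonneg (b * ‖L‖ - c * ‖K‖)]
    calc a + b * ‖K‖ + c * ‖L‖
        = Real.sqrt ((a + b * ‖K‖ + c * ‖L‖) ^ 2) := (Real.sqrt_sq hxnn).symm
      _ ≤ Real.sqrt ((1 + ‖K‖ ^ 2 + ‖L‖ ^ 2) * (a ^ 2 + b ^ 2 + c ^ 2)) :=
          Real.sqrt_le_sqrt hsq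
  -- bounds on the two terms
  have hP : (0:ℝ) ≤ ‖P‖ := norm_nonneg _
  have hA : (0:ℝ) ≤ ‖Acl‖ := norm_nonneg _
  have ht1 : frobNorm (δAclᵀ * P * Acl) ≤ ‖P‖ * ‖Acl‖ * frobNorm δAcl := by
    calc frobNorm (δAclᵀ * P * Acl) ≤ frobNorm (δAclᵀ * P) * ‖Acl‖ :=
          frobNorm_mul_opNorm _ _
      _ ≤ frobNorm δAclᵀ * ‖P‖ * ‖Acl‖ := by
          have := frobNorm_mul_opNorm δAclᵀ P
          nlinarith
      _ = ‖P‖ * ‖Acl‖ * frobNorm δAcl := by rw [frobNorm_transpose]; ring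
  have hAclT : ‖Aclᵀ‖ = ‖Acl‖ := by
    rw [← Matrix.conjTranspose_eq_transpose_of_trivial]
    exact Matrix.l2_opNorm_conjTranspose Acl
  have ht2 : frobNorm (Aclᵀ * P * δAcl) ≤ ‖P‖ * ‖Acl‖ * frobNorm δAcl := by
    calc frobNorm (Aclᵀ * P * δAcl) ≤ ‖Aclᵀ * P‖ * frobNorm δAcl :=
          opNorm_mul_frobNorm _ _
      _ ≤ ‖Aclᵀ‖ * ‖P‖ * frobNorm δAcl := by
          have h := norm_mul_le Aclᵀ P
          have := frobNorm_nonneg δAcl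
          nlinarith
      _ = ‖P‖ * ‖Acl‖ * frobNorm δAcl := by rw [hAclT]; ring
  have hsum : frobNorm (δAclᵀ * P * Acl + Aclᵀ * P * δAcl) ≤
      2 * ‖P‖ * ‖Acl‖ * frobNorm δAcl := by
    calc frobNorm (δAclᵀ * P * Acl + Aclᵀ * P * δAcl)
        ≤ frobNorm (δAclᵀ * P * Acl) + frobNorm (Aclᵀ * P * δAcl) :=
          frobNorm_add_le _ _
      _ ≤ 2 * ‖P‖ * ‖Acl‖ * frobNorm δAcl := by linarith
  have hchain : frobNorm δAcl ≤
      Real.sqrt (1 + ‖K‖ ^ 2 + ‖L‖ ^ 2) * Real.sqrt (a ^ 2 + b ^ 2 + c ^ 2) :=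
    hstep.trans hCS
  have hcoef : (0:ℝ) ≤ 2 * ‖P‖ * ‖Acl‖ := by positivity
  calc frobNorm (δAclᵀ * P * Acl + Aclᵀ * P * δAcl)
      ≤ 2 * ‖P‖ * ‖Acl‖ * frobNorm δAcl := hsum
    _ ≤ 2 * ‖P‖ * ‖Acl‖ *
        (Real.sqrt (1 + ‖K‖ ^ 2 + ‖L‖ ^ 2) * Real.sqrt (a ^ 2 + b ^ 2 + c ^ 2)) :=
        mul_le_mul_of_nonneg_left hchain hcoef
    _ = 2 * ‖P‖ * ‖Acl‖ * Real.sqrt (1 + ‖K‖ ^ 2 + ‖L‖ ^ 2) *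
        Real.sqrt (a ^ 2 + b ^ 2 + c ^ 2) := by ring
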